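/- For every nontrivial g ∈ H and every integer n ≥ 1, one has |g^n|_Y ≥ ⌊n/7⌋. -/

import Mathlib

set_option linter.unusedSectionVars false
set_option maxHeartbeats 1000000


open FreeGroup Filter

namespace PurelyLox

abbrev F : Type := FreeGroup (Fin 3)

def a : F := FreeGroup.of 0
def b : F := FreeGroup.of 1
def c : F := FreeGroup.of 2

/-- The subgroup generated by `a` and `b`. -/
def H : Subgroup F := Subgroup.closure {a, b}

/-- `g` is a positive word in the generators `a` and `b`. -/
def PosAB (g : F) : Prop :=
  ∀ x ∈ g.toWord, x.2 = true ∧ x.1 ≠ 2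

/-- A word is 7-aperiodic: it contains no subword `u^7` with `u` nonempty. -/
def Aperiodic7 {β : Type*} (w : List β) : Prop :=
  ¬ ∃ u : List β, u ≠ [] ∧ (List.flatten (List.replicate 7 u)) <:+: w

/-- The data of the fixed sequence `(v n)` of positive 7-aperiodic words in `a,b`,
with pairwise distinct lengths tending to infinity. -/
structure VSeq where
  v : ℕ → F
  pos : ∀ n, PosAB (v n)
  len_ne : ∀ m n, m ≠ n → ((v m).toWord.length ≠ (v n).toWord.length)
  len_tendsto : Tendsto (fun n => (v n).toWord.length) atTop atTop
  aperiodic : ∀ n, Aperiodic7 (v n).toWord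

/-- `w n = v n * c`. -/
def VSeq.w (V : VSeq) (n : ℕ) : F := V.v n * c

/-- `z` is a `W`-word: nontrivial, and its reduced word is a subword of
the reduced word of `(w n)^m` for some `n` and some `m ≠ 0`. -/
def VSeq.IsW (V : VSeq) (z : F) : Prop :=
  z ≠ 1 ∧ ∃ (n : ℕ) (m : ℤ), m ≠ 0 ∧ z.toWord <:+: ((V.w n) ^ m).toWord

/-- `|g|_Y`: the least `k` such that `g` is a product of `k` `W`-words. -/
noncomputable def VSeq.normY (V : VSeq) (g : F) : ℕ :=
  sInf {k | ∃ l : List F, l.length = k ∧ (∀ z ∈ l, V.IsW z) ∧ l.prod = g}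

/-- The vertex distance in the graph `Y`. -/
noncomputable def VSeq.dY (V : VSeq) (x y : F) : ℕ := V.normY (x⁻¹ * y)

/-- The product `u * v` is without cancellation. -/
def NoCancel (u v : F) : Prop := (u * v).toWord = u.toWord ++ v.toWord

/-- `p 0, p 1, …, p k` is a `d_Y`-geodesic from `x` to `y`. -/
def VSeq.IsGeodesic (V : VSeq) (x y : F) (k : ℕ) (p : ℕ → F) : Prop :=
  p 0 = x ∧ p k = y ∧ (∀ i < k, V.dY (p i) (p (i + 1)) = 1) ∧ k = V.dY x y

/-- `g` is cyclically reduced. -/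
def CyclicallyReduced (g : F) : Prop := (g * g).toWord = g.toWord ++ g.toWord

/-- `g` is root-free. -/
def RootFree (g : F) : Prop := ∀ (x : F) (s : ℤ), 2 ≤ |s| → g ≠ x ^ s


section Aux

open List FreeGroup


variable {β : Type*}

lemma flat_rep_succ (n : ℕ) (l : List β) :
    (replicate (n+1) l).flatten = l ++ (replicate n l).flatten := by
  rw [replicate_succ, flatten_cons]

lemma flat_rep_succ' (n : ℕ) (l : List β) :
    (replicate (n+1) l).flatten = (replicate n l).flatten ++ l := by
  rw [replicate_succ', flatten_append]; simp

lemma flat_rep_length (n : ℕ) (l : List β) :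
    (replicate n l).flatten.length = n * l.length := by
  induction n with
  | zero => simp
  | succ n ih => rw [flat_rep_succ, length_append, ih]; ring

lemma flat_rep_add (m n : ℕ) (l : List β) :
    (replicate (m+n) l).flatten = (replicate m l).flatten ++ (replicate n l).flatten := by
  rw [replicate_add, flatten_append]

lemma flat_rep_prefix {m n : ℕ} (h : m ≤ n) (l : List β) :
    (replicate m l).flatten <+: (replicate n l).flatten := by
  obtain ⟨k, rfl⟩ := Nat.exists_eq_add_of_le h
  rw [flat_rep_add]; exact prefix_append _ _

lemma flat_rep_drop {j n : ℕ} (h : j ≤ n) (l : List β) :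
    (replicate n l).flatten.drop (j * l.length) = (replicate (n-j) l).flatten := by
  obtain ⟨k, rfl⟩ := Nat.exists_eq_add_of_le h
  rw [flat_rep_add, drop_append, flat_rep_length]
  simp

lemma rot_ident (q n : ℕ) (U : List β) :
    (replicate n U).flatten ++ U.take q
      = U.take q ++ (replicate n (U.drop q ++ U.take q)).flatten := by
  induction n with
  | zero => simp
  | succ n ih =>
    rw [flat_rep_succ, flat_rep_succ, append_assoc, ih]
    nth_rewrite 1 [← take_append_drop q U]
    simp only [append_assoc]

/-- An infix of `U^n` of length at least `7|U|` contains a 7th power. -/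
lemma seventh_power {U r : List β} {n : ℕ} (hU : U ≠ [])
    (hr : r <:+: (replicate n U).flatten) (hlen : 7 * U.length ≤ r.length) :
    ∃ u : List β, u ≠ [] ∧ (replicate 7 u).flatten <:+: r := by
  obtain ⟨s, t, hst⟩ := hr
  set ℓ := U.length with hℓ
  have hℓpos : 0 < ℓ := length_pos_iff.2 hU
  set q := s.length % ℓ with hq
  set j := s.length / ℓ with hj
  set V := U.drop q ++ U.take q with hV
  have hqlt : q < ℓ := Nat.mod_lt _ hℓpos
  have hVlen : V.length = ℓ := by
    rw [hV, length_append, length_drop, length_take]; omega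
  have hVne : V ≠ [] := ne_nil_of_length_pos (by omega)
  have htot := congrArg length hst
  simp only [length_append, flat_rep_length] at htot
  simp only [← hℓ] at htot
  have h7n : 7 ≤ n := by
    have h1 : 7 * ℓ ≤ n * ℓ := by linarith
    exact Nat.le_of_mul_le_mul_right h1 hℓpos
  have hjn : j ≤ n - 7 := by
    have h3 : (n - 7) * ℓ + 7 * ℓ = n * ℓ := by
      rw [← Nat.add_mul]; congr 1; omega
    have hsle : s.length ≤ (n - 7) * ℓ := by linarith
    calc j = s.length / ℓ := hj
      _ ≤ ((n-7) * ℓ) / ℓ := Nat.div_le_div_right hsle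
      _ = n - 7 := Nat.mul_div_cancel _ hℓpos
  have key : s ++ (r ++ (t ++ U.take q)) = U.take q ++ (replicate n V).flatten := by
    rw [hV, ← rot_ident, ← hst]; simp [append_assoc]
  have hqlen : (U.take q).length = q := by rw [length_take]; omega
  have hdrop : r ++ (t ++ U.take q) = (replicate (n - j) V).flatten := by
    have h1 := congrArg (fun L => drop s.length L) key
    rw [drop_left, drop_append, hqlen] at h1
    have hsq : q ≤ s.length := Nat.mod_le _ _
    have h2 : (U.take q).drop s.length = [] := drop_eq_nil_of_le (by omega)
    rw [h2, nil_append] at h1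
    have hdm : j * ℓ + q = s.length := by
      rw [hj, hq]; exact Nat.div_add_mod' _ _
    have h3 : s.length - q = j * V.length := by
      rw [hVlen, ← hdm, Nat.add_sub_cancel]
    rw [h1, h3, flat_rep_drop (by omega) V]
  have hrpre : r <+: (replicate (n - j) V).flatten :=
    ⟨t ++ U.take q, by rw [← hdrop]⟩
  have h7pre : (replicate 7 V).flatten <+: (replicate (n - j) V).flatten :=
    flat_rep_prefix (by omega) V
  have h7len : (replicate 7 V).flatten.length = 7 * ℓ := by rw [flat_rep_length, hVlen]
  have : (replicate 7 V).flatten <+: r :=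
    prefix_of_prefix_length_le h7pre hrpre (by omega)
  exact ⟨V, hVne, this.isInfix⟩



variable {β : Type*}

lemma prefix_flatten_decomp :
    ∀ (qs : List (List β)) (Q : List β), Q <+: qs.flatten →
      ∃ rs : List (List β), List.Forall₂ (· <:+: ·) rs qs ∧ rs.flatten = Q := by
  intro qs
  induction qs with
  | nil =>
    intro Q hQ
    simp only [List.flatten_nil, List.prefix_nil] at hQ
    exact ⟨[], List.Forall₂.nil, by simp [hQ]⟩
  | cons q qs ih =>
    intro Q hQ
    have hQeq : Q = (q ++ qs.flatten).take Q.length := by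
      rw [← List.prefix_iff_eq_take.mp (by simpa using hQ)]
    rw [take_append] at hQeq
    have h2 : qs.flatten.take (Q.length - q.length) <+: qs.flatten := take_prefix _ _
    obtain ⟨rs, hrs, hflat⟩ := ih _ h2
    refine ⟨(q.take Q.length) :: rs, List.Forall₂.cons (take_prefix _ _).isInfix hrs, ?_⟩
    rw [flatten_cons, hflat, ← hQeq]

lemma suffix_flatten_decomp :
    ∀ (qs : List (List β)) (Q : List β), Q <:+ qs.flatten →
      ∃ rs : List (List β), List.Forall₂ (· <:+: ·) rs qs ∧ rs.flatten = Q := by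
  intro qs
  induction qs with
  | nil =>
    intro Q hQ
    simp only [List.flatten_nil, List.suffix_nil] at hQ
    exact ⟨[], List.Forall₂.nil, by simp [hQ]⟩
  | cons q qs ih =>
    intro Q hQ
    have hQeq : Q = (q ++ qs.flatten).drop ((q ++ qs.flatten).length - Q.length) := by
      rw [← List.suffix_iff_eq_drop.mp (by simpa using hQ)]
    set d := (q ++ qs.flatten).length - Q.length with hd
    rw [drop_append] at hQeq
    obtain ⟨rs, hrs, hflat⟩ := ih _ (drop_suffix _ _)
    refine ⟨(q.drop d) :: rs, List.Forall₂.cons (drop_suffix _ _).isInfix hrs, ?_⟩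
    rw [flatten_cons, hflat, ← hQeq]

lemma forall₂_infix_trans {as bs cs : List (List β)}
    (h1 : List.Forall₂ (· <:+: ·) as bs) (h2 : List.Forall₂ (· <:+: ·) bs cs) :
    List.Forall₂ (· <:+: ·) as cs := by
  induction h2 generalizing as with
  | nil => cases h1; exact .nil
  | cons hbc _ ih =>
    cases h1 with
    | cons hab h1' => exact .cons (hab.trans hbc) (ih h1')

lemma infix_flatten_decomp (qs : List (List β)) (Q : List β) (hQ : Q <:+: qs.flatten) :
    ∃ rs : List (List β), List.Forall₂ (· <:+: ·) rs qs ∧ rs.flatten = Q := by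
  obtain ⟨s, t, hst⟩ := hQ
  have hsuf : Q ++ t <:+ qs.flatten := ⟨s, by rw [← hst]; simp [List.append_assoc]⟩
  obtain ⟨rs, hrs, hflat⟩ := suffix_flatten_decomp qs _ hsuf
  have hpre : Q <+: rs.flatten := by rw [hflat]; exact ⟨t, rfl⟩
  obtain ⟨rs', hrs', hflat'⟩ := prefix_flatten_decomp rs _ hpre
  exact ⟨rs', forall₂_infix_trans hrs' hrs, hflat'⟩

/-- If `Q` is an infix of `X ++ e :: Y` avoiding the letter `e`, it is an infix of `X` or `Y`. -/
lemma efree_infix {Q X Y : List β} {e : β} (h : Q <:+: X ++ e :: Y) (he : e ∉ Q) :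
    Q <:+: X ∨ Q <:+: Y := by
  obtain ⟨s, t, hst⟩ := h
  rw [List.append_assoc] at hst
  rcases List.append_eq_append_iff.mp hst with ⟨a, ha1, ha2⟩ | ⟨d, hd1, hd2⟩
  · rcases List.append_eq_append_iff.mp ha2 with ⟨u, hu1, hu2⟩ | ⟨u, hu1, hu2⟩
    · left; exact ⟨s, u, by rw [ha1, hu1, List.append_assoc]⟩
    · cases u with
      | nil => left; simp at hu1; exact ⟨s, [], by simp [ha1, hu1]⟩
      | cons x u' =>
        exfalso; apply he
        have hx : x = e := (List.cons.injEq _ _ _ _ ▸ hu2).1.symm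
        rw [hu1, hx]
        exact List.mem_append_right _ (List.mem_cons_self)
  · cases d with
    | nil =>
      simp only [List.nil_append] at hd2
      cases Q with
      | nil => left; exact List.nil_infix
      | cons x Q' =>
        exfalso; apply he
        have hx : x = e := by
          have := hd2.symm
          simp only [List.cons_append] at this
          exact (List.cons.injEq _ _ _ _ ▸ this).1
        rw [hx]; exact List.mem_cons_self
    | cons x d' =>
      right
      have hx : x = e := by
        have := hd2
        simp only [List.cons_append] at this
        exact ((List.cons.injEq _ _ _ _ ▸ this).1).symm
      have hY : Y = d' ++ (Q ++ t) := by
        have := hd2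
        simp only [List.cons_append] at this
        exact (List.cons.injEq _ _ _ _ ▸ this).2
      exact ⟨d', t, by rw [hY, List.append_assoc]⟩



variable {α : Type*} [DecidableEq α]

/-- The non-cancellation relation between adjacent letters. -/
def NC (x y : α × Bool) : Prop := ¬(x.1 = y.1 ∧ y.2 = !x.2)

/-- A word is reduced. -/
def IsRed (L : List (α × Bool)) : Prop := List.IsChain NC L

lemma isRed_infix {L M : List (α × Bool)} (h : IsRed L) (h' : M <:+: L) : IsRed M :=
  List.IsChain.infix h h'

lemma reduce_eq_self_of_isRed {L : List (α × Bool)} (h : IsRed L) : reduce L = L := by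
  induction L with
  | nil => rfl
  | cons x L ih =>
    have hL : IsRed L := (List.isChain_cons.mp h).2
    rw [reduce.cons, ih hL]
    cases hL2 : L with
    | nil => rfl
    | cons y t =>
      have hnc : NC x y := by
        rw [hL2] at h
        exact (List.isChain_cons_cons.mp h).1
      simp only []
      rw [if_neg]
      intro ⟨h1, h2⟩
      exact hnc ⟨h1, by rw [h2, Bool.not_not]⟩

lemma exists_cancel_of_not_isRed {L : List (α × Bool)} (h : ¬ IsRed L) :
    ∃ (L₁ L₂ : List (α × Bool)) (x : α) (b : Bool), L = L₁ ++ (x, b) :: (x, !b) :: L₂ := by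
  induction L with
  | nil => exact absurd List.isChain_nil h
  | cons x L ih =>
    cases L with
    | nil => exact absurd (List.isChain_singleton x) h
    | cons y t =>
      rw [IsRed, List.isChain_cons_cons] at h
      push_neg at h
      by_cases hxy : NC x y
      · obtain ⟨L₁, L₂, z, b, hL⟩ := ih (h hxy)
        exact ⟨x :: L₁, L₂, z, b, by rw [hL]; simp⟩
      · have hxy' : x.1 = y.1 ∧ y.2 = !x.2 := by
          by_contra hc; exact hxy hc
        obtain ⟨h1, h2⟩ := hxy'
        refine ⟨[], t, x.1, x.2, ?_⟩
        have hy : y = (x.1, !x.2) := by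
          rw [Prod.ext_iff]; exact ⟨h1.symm, h2⟩
        rw [List.nil_append, ← hy, Prod.mk.eta]

lemma isRed_toWord (x : FreeGroup α) : IsRed x.toWord := by
  by_contra h
  obtain ⟨L₁, L₂, z, b, hL⟩ := exists_cancel_of_not_isRed h
  have : reduce x.toWord = x.toWord := reduce_toWord x
  rw [hL] at this
  exact reduce.not this

lemma toWord_mk_isRed {L : List (α × Bool)} (h : IsRed L) : (mk L).toWord = L := by
  rw [toWord_mk, reduce_eq_self_of_isRed h]



lemma head?_append_left {l₁ l₂ : List (α × Bool)} (h : l₁ ≠ []) :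
    (l₁ ++ l₂).head? = l₁.head? := by
  cases l₁ with
  | nil => exact absurd rfl h
  | cons x t => rfl

lemma getLast?_append_right {l₁ l₂ : List (α × Bool)} (h : l₂ ≠ []) :
    (l₁ ++ l₂).getLast? = l₂.getLast? := by
  obtain ⟨t, x, rfl⟩ := l₂.eq_nil_or_concat.resolve_left h
  rw [List.concat_eq_append, ← List.append_assoc, List.getLast?_concat, List.getLast?_concat]

lemma isRed_of_all_true {L : List (α × Bool)} (h : ∀ x ∈ L, x.2 = true) : IsRed L := by
  induction L with
  | nil => exact List.isChain_nil
  | cons x L ih =>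
    refine List.isChain_cons.2 ⟨fun y hy => ?_, ih fun y hy => h y (List.mem_cons_of_mem _ hy)⟩
    intro ⟨h1, h2⟩
    have hyL : y ∈ L := List.mem_of_mem_head? hy
    have := h y (List.mem_cons_of_mem _ hyL)
    have hx := h x (List.mem_cons_self)
    rw [this, hx] at h2
    simp at h2

lemma invRev_append (A B : List (α × Bool)) : invRev (A ++ B) = invRev B ++ invRev A := by
  simp [invRev]

lemma mem_invRev {x : α × Bool} {L : List (α × Bool)} : x ∈ invRev L ↔ (x.1, !x.2) ∈ L := by
  simp only [invRev, List.mem_reverse, List.mem_map]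
  constructor
  · rintro ⟨a, ha, rfl⟩
    simpa [Bool.not_not] using ha
  · intro h
    exact ⟨(x.1, !x.2), h, by simp [Bool.not_not]⟩

lemma invRev_flat_rep (n : ℕ) (u : List (α × Bool)) :
    invRev ((List.replicate n u).flatten) = (List.replicate n (invRev u)).flatten := by
  induction n with
  | zero => simp [invRev]
  | succ n ih =>
    rw [List.replicate_succ, List.flatten_cons, invRev_append, ih, List.replicate_succ',
      List.flatten_append]
    simp

lemma infix_invRev_of {L M : List (α × Bool)} (h : L <:+: invRev M) : invRev L <:+: M := by
  obtain ⟨s, t, hst⟩ := h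
  have : M = invRev t ++ invRev L ++ invRev s := by
    rw [← invRev_invRev (L₁ := M), ← hst, invRev_append, invRev_append]
    simp [List.append_assoc]
  exact ⟨invRev t, invRev s, this.symm⟩


lemma reduce_append_decomp :
    ∀ (k : ℕ) (L M : List (α × Bool)), L.length ≤ k → IsRed L → IsRed M →
      ∃ P S, P <+: L ∧ S <:+ M ∧ reduce (L ++ M) = P ++ S := by
  intro k
  induction k with
  | zero =>
    intro L M hk _ hM
    have : L = [] := List.eq_nil_of_length_eq_zero (Nat.le_zero.mp hk)
    subst this
    exact ⟨[], M, List.nil_prefix, List.suffix_refl M, by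
      rw [List.nil_append, reduce_eq_self_of_isRed hM]⟩
  | succ k ih =>
    intro L M hk hL hM
    rcases L.eq_nil_or_concat with rfl | ⟨L'', ℓ, rfl⟩
    · exact ⟨[], M, List.nil_prefix, List.suffix_refl M, by
        rw [List.nil_append, reduce_eq_self_of_isRed hM]⟩
    cases M with
    | nil =>
      exact ⟨L''.concat ℓ, [], List.prefix_refl _, List.suffix_refl _, by
        rw [List.append_nil, reduce_eq_self_of_isRed hL]⟩
    | cons m M' =>
      rw [List.concat_eq_append] at *
      by_cases hc : ℓ.1 = m.1 ∧ m.2 = !ℓ.2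
      · -- cancellation
        have hm : m = (ℓ.1, !ℓ.2) := by
          rw [Prod.ext_iff]; exact ⟨hc.1.symm, hc.2⟩
        have hstep : Red.Step ((L'' ++ [ℓ]) ++ m :: M') (L'' ++ M') := by
          rw [hm]
          have : (L'' ++ [ℓ]) ++ (ℓ.1, !ℓ.2) :: M' = L'' ++ (ℓ.1, ℓ.2) :: (ℓ.1, !ℓ.2) :: M' := by
            simp [List.append_assoc]
          rw [this]
          exact Red.Step.not
        have hred : reduce ((L'' ++ [ℓ]) ++ m :: M') = reduce (L'' ++ M') :=
          reduce.Step.eq hstep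
        have hL'' : IsRed L'' := List.IsChain.prefix hL ⟨[ℓ], rfl⟩
        have hM' : IsRed M' := List.IsChain.suffix hM ⟨[m], rfl⟩
        have hlen : L''.length ≤ k := by
          have := hk
          simp only [List.length_append, List.length_cons] at this ⊢
          simp at this
          omega
        obtain ⟨P, S, hP, hS, heq⟩ := ih L'' M' hlen hL'' hM'
        exact ⟨P, S, hP.trans (List.prefix_append _ _), hS.trans ⟨[m], rfl⟩,
          by rw [hred, heq]⟩
      · -- no cancellation: the concatenation is reduced
        have hredLM : IsRed ((L'' ++ [ℓ]) ++ m :: M') := by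
          rw [IsRed, List.isChain_append]
          refine ⟨hL, hM, ?_⟩
          intro x hx y hy
          rw [getLast?_append_right (by simp)] at hx
          simp only [List.getLast?_singleton, Option.mem_def, Option.some.injEq] at hx
          simp only [List.head?_cons, Option.mem_def, Option.some.injEq] at hy
          subst hx; subst hy
          exact hc
        exact ⟨L'' ++ [ℓ], m :: M', List.prefix_refl _, List.suffix_refl _,
          reduce_eq_self_of_isRed hredLM⟩

lemma mul_toWord_decomp (x y : FreeGroup α) :
    ∃ P S, P <+: x.toWord ∧ S <:+ y.toWord ∧ (x * y).toWord = P ++ S := by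
  obtain ⟨P, S, hP, hS, heq⟩ := reduce_append_decomp x.toWord.length x.toWord y.toWord
    le_rfl (isRed_toWord x) (isRed_toWord y)
  refine ⟨P, S, hP, hS, ?_⟩
  have : x * y = mk (x.toWord ++ y.toWord) := by
    rw [← mul_mk, mk_toWord, mk_toWord]
  rw [this, toWord_mk, heq]

lemma forall₂_infix_toWord_trans {rs qs : List (List (α × Bool))} {l : List (FreeGroup α)}
    (h1 : List.Forall₂ (· <:+: ·) rs qs)
    (h2 : List.Forall₂ (fun Q (z : FreeGroup α) => Q <:+: z.toWord) qs l) :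
    List.Forall₂ (fun Q (z : FreeGroup α) => Q <:+: z.toWord) rs l := by
  induction h2 generalizing rs with
  | nil => cases h1; exact .nil
  | cons hbc _ ih =>
    cases h1 with
    | cons hab h1' => exact .cons (hab.trans hbc) (ih h1')

lemma prod_toWord_cover (l : List (FreeGroup α)) :
    ∃ qs : List (List (α × Bool)),
      List.Forall₂ (fun Q (z : FreeGroup α) => Q <:+: z.toWord) qs l ∧
      qs.flatten = (l.prod).toWord := by
  induction l with
  | nil => exact ⟨[], .nil, by simp⟩
  | cons z l' ih =>
    obtain ⟨qs', hqs', hflat'⟩ := ih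
    obtain ⟨P, S, hP, hS, heq⟩ := mul_toWord_decomp z l'.prod
    rw [← hflat'] at hS
    obtain ⟨rs, hrs, hrflat⟩ := suffix_flatten_decomp qs' S hS
    refine ⟨P :: rs, .cons hP.isInfix (forall₂_infix_toWord_trans hrs hqs'), ?_⟩
    rw [List.flatten_cons, hrflat, List.prod_cons, heq]

lemma isRed_pow_word {U : List (α × Bool)} (hUU : IsRed (U ++ U)) :
    ∀ n, IsRed ((List.replicate n U).flatten) := by
  have hU : IsRed U := List.IsChain.prefix hUU (List.prefix_append _ _)
  obtain ⟨_, _, hJ⟩ := List.isChain_append.mp hUU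
  intro n
  induction n with
  | zero => exact List.isChain_nil
  | succ n ih =>
    rw [flat_rep_succ, IsRed, List.isChain_append]
    refine ⟨hU, ih, ?_⟩
    intro x hx y hy
    cases n with
    | zero => simp at hy
    | succ n =>
      rw [flat_rep_succ] at hy
      by_cases hUnil : U = []
      · subst hUnil; simp at hy
      · rw [head?_append_left hUnil] at hy
        exact hJ x hx y hy

lemma pow_word_head {U : List (α × Bool)} (hU : U ≠ []) (n : ℕ) (hn : 1 ≤ n) :
    ((List.replicate n U).flatten).head? = U.head? := by
  obtain ⟨m, rfl⟩ := Nat.exists_eq_add_of_le hn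
  rw [Nat.add_comm, flat_rep_succ, head?_append_left hU]

lemma pow_word_getLast {U : List (α × Bool)} (hU : U ≠ []) (n : ℕ) (hn : 1 ≤ n) :
    ((List.replicate n U).flatten).getLast? = U.getLast? := by
  obtain ⟨m, rfl⟩ := Nat.exists_eq_add_of_le hn
  rw [Nat.add_comm, flat_rep_succ', getLast?_append_right hU]

/-- Cyclically reduced conjugacy decomposition. -/
lemma cyc_decomp : ∀ (k : ℕ) (g : FreeGroup α), g.toWord.length ≤ k → g ≠ 1 →
    ∃ X U : List (α × Bool),
      g.toWord = X ++ U ++ invRev X ∧ U ≠ [] ∧ IsRed (U ++ U) ∧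
      g = mk X * mk U * (mk X)⁻¹ := by
  intro k
  induction k with
  | zero =>
    intro g hk hg
    exact absurd (toWord_eq_nil_iff.mp (List.eq_nil_of_length_eq_zero (Nat.le_zero.mp hk))) hg
  | succ k ih =>
    intro g hk hg
    have hred : IsRed g.toWord := isRed_toWord g
    have hWnil : g.toWord ≠ [] := fun h => hg (toWord_eq_nil_iff.mp h)
    by_cases hWW : IsRed (g.toWord ++ g.toWord)
    · refine ⟨[], g.toWord, by simp [invRev], hWnil, hWW, ?_⟩
      rw [one_eq_mk.symm]
      simp [mk_toWord]
    · rw [IsRed, List.isChain_append] at hWW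
      push_neg at hWW
      obtain ⟨x, hx, y, hy, hxy⟩ := hWW hred hred
      rw [NC, not_not] at hxy
      obtain ⟨T, hW⟩ : ∃ T, g.toWord = y :: T := by
        cases hW : g.toWord with
        | nil => exact absurd hW hWnil
        | cons y' T =>
          rw [hW] at hy
          simp at hy
          exact ⟨T, by rw [hy]⟩
      rcases T.eq_nil_or_concat with rfl | ⟨T₀, z, rfl⟩
      · exfalso
        rw [hW] at hx
        simp at hx
        subst hx
        simp at hxy
      · rw [List.concat_eq_append] at hW
        have hxz : z = x := by
          rw [hW] at hx
          rw [show y :: (T₀ ++ [z]) = (y :: T₀) ++ [z] from rfl,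
            getLast?_append_right (by simp)] at hx
          simp at hx
          exact hx
        rw [← hxz] at hxy
        have hyx : y = (z.1, !z.2) := by
          rw [Prod.ext_iff]; exact ⟨hxy.1.symm, hxy.2⟩
        have hzy : z = (y.1, !y.2) := by
          rw [hyx]; simp
        have hT₀red : IsRed T₀ := by
          have : T₀ <:+: g.toWord := ⟨[y], [z], by rw [hW]; simp⟩
          exact isRed_infix hred this
        have hT₀nil : T₀ ≠ [] := by
          rintro rfl
          rw [hW] at hred
          simp only [List.nil_append] at hred
          have := (List.isChain_cons_cons.mp hred).1
          exact this ⟨hxy.1.symm ▸ rfl, by rw [hyx]; simp⟩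
        have hg' : (mk T₀ : FreeGroup α).toWord = T₀ := toWord_mk_isRed hT₀red
        have hg'ne : (mk T₀ : FreeGroup α) ≠ 1 := by
          intro h
          rw [h, toWord_one] at hg'
          exact hT₀nil hg'.symm
        have hlen : (mk T₀ : FreeGroup α).toWord.length ≤ k := by
          rw [hg']
          have := congrArg List.length hW
          simp at this
          omega
        obtain ⟨X', U, hdec, hUnil, hUU, hconj⟩ := ih (mk T₀) hlen hg'ne
        rw [hg'] at hdec
        refine ⟨y :: X', U, ?_, hUnil, hUU, ?_⟩
        · rw [hW, hdec]
          have hinv : invRev (y :: X') = invRev X' ++ [z] := by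
            rw [show y :: X' = [y] ++ X' from rfl, invRev_append]
            congr 1
            rw [hzy]
            simp [invRev]
          rw [hinv]
          simp [List.append_assoc]
        · have hmky : mk [z] = (mk [y] : FreeGroup α)⁻¹ := by
            rw [inv_mk]
            congr 1
            rw [hzy]
            simp [invRev]
          have hgsplit : g = mk [y] * mk T₀ * mk [z] := by
            rw [← mk_toWord (x := g), hW]
            rw [mul_mk, mul_mk]
            congr 1 <;> simp
          rw [hgsplit, hconj, hmky]
          have : mk (y :: X') = mk [y] * mk X' := by rw [mul_mk]; rfl
          rw [this]
          group

lemma pow_toWord {g : FreeGroup α} {X U : List (α × Bool)}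
    (hW : g.toWord = X ++ U ++ invRev X) (hUnil : U ≠ []) (hUU : IsRed (U ++ U))
    (hconj : g = mk X * mk U * (mk X)⁻¹) {n : ℕ} (hn : 1 ≤ n) :
    (g ^ n).toWord = X ++ (List.replicate n U).flatten ++ invRev X := by
  have hflnil : (List.replicate n U).flatten ≠ [] := by
    intro h
    have := congrArg List.length h
    rw [flat_rep_length] at this
    simp only [List.length_nil] at this
    have := List.length_pos_iff.2 hUnil
    nlinarith
  have hredW : IsRed (X ++ (U ++ invRev X)) := by
    have := isRed_toWord g
    rw [hW, List.append_assoc] at this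
    exact this
  obtain ⟨hX, h2, J1⟩ := List.isChain_append.mp hredW
  obtain ⟨hU, hinvX, J2⟩ := List.isChain_append.mp h2
  have hredbig : IsRed (X ++ ((List.replicate n U).flatten ++ invRev X)) := by
    rw [IsRed, List.isChain_append]
    refine ⟨hX, ?_, ?_⟩
    · rw [List.isChain_append]
      refine ⟨isRed_pow_word hUU n, hinvX, ?_⟩
      intro a ha b hb
      rw [pow_word_getLast hUnil n hn] at ha
      exact J2 a ha b hb
    · intro a ha b hb
      rw [head?_append_left hflnil, pow_word_head hUnil n hn] at hb
      refine J1 a ha b ?_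
      rw [head?_append_left hUnil]
      exact hb
  have hpow : g ^ n = mk (X ++ ((List.replicate n U).flatten ++ invRev X)) := by
    rw [hconj, conj_pow, pow_mk, inv_mk, mul_mk, mul_mk, List.append_assoc]
  rw [hpow, toWord_mk_isRed hredbig, List.append_assoc]


lemma flat_rep_singleton {β : Type*} (k : ℕ) (x : β) :
    (List.replicate k [x]).flatten = List.replicate k x := by
  induction k with
  | zero => rfl
  | succ k ih => simp [List.replicate_succ, ih]

lemma mem_flatten_infix {β : Type*} {L : List (List β)} {l : List β} (h : l ∈ L) :
    l <:+: L.flatten := by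
  obtain ⟨s, t, rfl⟩ := List.append_of_mem h
  exact ⟨s.flatten, t.flatten, by simp⟩

lemma forall₂_exists_right {γ δ : Type*} {R : γ → δ → Prop} {as : List γ} {bs : List δ}
    (h : List.Forall₂ R as bs) {x : γ} (hx : x ∈ as) : ∃ y ∈ bs, R x y := by
  induction h with
  | nil => simp at hx
  | cons hr h ih =>
    rcases List.mem_cons.mp hx with rfl | hx'
    · exact ⟨_, List.mem_cons_self, hr⟩
    · obtain ⟨y, hy, hxy⟩ := ih hx'
      exact ⟨y, List.mem_cons_of_mem _ hy, hxy⟩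

lemma fin3_eq_one {i : Fin 3} (h2 : i ≠ 2) (h0 : i ≠ 0) : i = 1 := by
  fin_cases i <;> simp_all

lemma fin3_eq_zero {i : Fin 3} (h2 : i ≠ 2) (h1 : i ≠ 1) : i = 0 := by
  fin_cases i <;> simp_all

lemma aperiodic7_infix {β : Type*} {L M : List β} (h : Aperiodic7 L) (h' : M <:+: L) :
    Aperiodic7 M := fun ⟨u, hu, hinf⟩ => h ⟨u, hu, hinf.trans h'⟩

lemma aperiodic7_invRev {α : Type*} [DecidableEq α] {L : List (α × Bool)} (h : Aperiodic7 L) :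
    Aperiodic7 (invRev L) := by
  rintro ⟨u, hu, hinf⟩
  apply h
  refine ⟨invRev u, ?_, ?_⟩
  · intro hc
    apply hu
    have := congrArg List.length hc
    rw [invRev_length] at this
    exact List.eq_nil_of_length_eq_zero this
  · have h2 := infix_invRev_of hinf
    rwa [invRev_flat_rep] at h2

lemma efree_flatten {β : Type*} {A Q : List β} {e : β} :
    ∀ k, Q <:+: (List.replicate k (A ++ [e])).flatten → e ∉ Q → Q <:+: A := by
  intro k
  induction k with
  | zero =>
    intro h _
    simp only [List.replicate_zero, List.flatten_nil, List.infix_nil] at h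
    rw [h]
    exact List.nil_infix
  | succ k ih =>
    intro h he
    rw [flat_rep_succ, List.append_assoc, List.singleton_append] at h
    rcases efree_infix h he with h1 | h1
    · exact h1
    · exact ih h1 he

lemma c_toWord : c.toWord = [((2 : Fin 3), true)] := toWord_of 2

lemma w_eq_mk (V : VSeq) (n : ℕ) :
    V.w n = mk ((V.v n).toWord ++ [((2 : Fin 3), true)]) := by
  calc V.w n = V.v n * c := rfl
    _ = mk ((V.v n).toWord) * mk (c.toWord) := by rw [mk_toWord, mk_toWord]
    _ = mk ((V.v n).toWord ++ [((2 : Fin 3), true)]) := by rw [mul_mk, c_toWord]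

lemma w_pow_toWord (V : VSeq) (n k : ℕ) :
    ((V.w n) ^ k).toWord
      = (List.replicate k ((V.v n).toWord ++ [((2 : Fin 3), true)])).flatten := by
  rw [w_eq_mk, pow_mk]
  apply toWord_mk_isRed
  apply isRed_of_all_true
  intro x hx
  rw [List.mem_flatten] at hx
  obtain ⟨L', hL', hxL⟩ := hx
  rw [List.eq_of_mem_replicate hL'] at hxL
  rcases List.mem_append.mp hxL with h | h
  · exact ((V.pos n) x h).1
  · simp at h; rw [h]

lemma isW_piece_aperiodic (V : VSeq) {r : List (Fin 3 × Bool)} {n : ℕ} {m : ℤ} (hm : m ≠ 0)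
    (hr : r <:+: ((V.w n) ^ m).toWord) (hfree : ∀ x ∈ r, x.1 ≠ 2) : Aperiodic7 r := by
  rcases hm.lt_or_gt with hneg | hpos
  · have h1 : (V.w n) ^ m = ((V.w n) ^ ((-m).toNat))⁻¹ := by
      rw [← zpow_natCast, Int.toNat_of_nonneg (by omega : (0:ℤ) ≤ -m), zpow_neg, inv_inv]
    rw [h1, toWord_inv, w_pow_toWord] at hr
    have h2 := infix_invRev_of hr
    have hfree' : ((2 : Fin 3), true) ∉ invRev r := by
      intro hc
      exact hfree _ (mem_invRev.mp hc) rfl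
    have h3 := efree_flatten _ h2 hfree'
    have h4 : Aperiodic7 (invRev r) := aperiodic7_infix (V.aperiodic n) h3
    have h5 := aperiodic7_invRev h4
    rwa [invRev_invRev] at h5
  · have h1 : (V.w n) ^ m = (V.w n) ^ (m.toNat) := by
      rw [← zpow_natCast, Int.toNat_of_nonneg (le_of_lt hpos)]
    rw [h1, w_pow_toWord] at hr
    have hfree' : ((2 : Fin 3), true) ∉ r := fun hc => hfree _ hc rfl
    exact aperiodic7_infix (V.aperiodic n) (efree_flatten _ hr hfree')

lemma mem_H_cfree {g : F} (hg : g ∈ H) : ∀ x ∈ g.toWord, x.1 ≠ 2 := by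
  induction hg using Subgroup.closure_induction with
  | mem x hx =>
    rcases hx with rfl | rfl
    · intro y hy
      simp only [a, toWord_of, List.mem_singleton] at hy
      rw [hy]; decide
    · intro y hy
      simp only [b, toWord_of, List.mem_singleton] at hy
      rw [hy]; decide
  | one => simp [toWord_one]
  | mul x y _ _ ihx ihy =>
    intro z hz
    have hz' := (toWord_mul_sublist x y).subset hz
    rcases List.mem_append.mp hz' with h | h
    exacts [ihx z h, ihy z h]
  | inv x _ ih =>
    intro z hz
    rw [toWord_inv] at hz
    exact ih (z.1, !z.2) (mem_invRev.mp hz)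

lemma v_has_letters (V : VSeq) :
    ∃ n, ((0 : Fin 3), true) ∈ (V.v n).toWord ∧ ((1 : Fin 3), true) ∈ (V.v n).toWord := by
  obtain ⟨n, hn⟩ := (V.len_tendsto.eventually_ge_atTop 7).exists
  have hall := V.pos n
  have main : ∀ i : Fin 3, (∀ x ∈ (V.v n).toWord, x.1 = i) → False := by
    intro i hi
    apply V.aperiodic n
    refine ⟨[(i, true)], by simp, ?_⟩
    have hrep : (V.v n).toWord = List.replicate ((V.v n).toWord.length) (i, true) := by
      apply List.eq_replicate_of_mem
      intro x hx
      rw [Prod.ext_iff]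
      exact ⟨hi x hx, (hall x hx).1⟩
    rw [hrep, flat_rep_singleton]
    apply List.IsPrefix.isInfix
    have := List.take_prefix 7 (List.replicate ((V.v n).toWord.length) (i, true))
    rwa [List.take_replicate, min_eq_left hn] at this
  refine ⟨n, ?_, ?_⟩
  · by_contra h0
    apply main 1
    intro x hx
    have hx0 : x.1 ≠ 0 := by
      intro h
      apply h0
      have hxe : x = ((0 : Fin 3), true) := by
        rw [Prod.ext_iff]; exact ⟨h, (hall x hx).1⟩
      exact hxe ▸ hx
    exact fin3_eq_one (hall x hx).2 hx0
  · by_contra h1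
    apply main 0
    intro x hx
    have hx1 : x.1 ≠ 1 := by
      intro h
      apply h1
      have hxe : x = ((1 : Fin 3), true) := by
        rw [Prod.ext_iff]; exact ⟨h, (hall x hx).1⟩
      exact hxe ▸ hx
    exact fin3_eq_zero (hall x hx).2 hx1

lemma isW_of (V : VSeq) {i : Fin 3} {n : ℕ} (hi : (i, true) ∈ (V.v n).toWord) :
    V.IsW (FreeGroup.of i) := by
  refine ⟨of_ne_one i, n, 1, one_ne_zero, ?_⟩
  rw [zpow_one, toWord_of]
  have hw : (V.w n).toWord = (V.v n).toWord ++ [((2 : Fin 3), true)] := by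
    have := w_pow_toWord V n 1
    rwa [pow_one, List.replicate_one, List.flatten_cons, List.flatten_nil,
      List.append_nil] at this
  rw [hw]
  obtain ⟨s, t, hst⟩ := List.append_of_mem hi
  exact ⟨s, t ++ [((2 : Fin 3), true)], by rw [hst]; simp⟩

lemma isW_inv (V : VSeq) {z : F} (h : V.IsW z) : V.IsW z⁻¹ := by
  obtain ⟨h1, n, m, hm, hinf⟩ := h
  refine ⟨inv_ne_one.mpr h1, n, -m, neg_ne_zero.mpr hm, ?_⟩
  rw [zpow_neg, toWord_inv, toWord_inv]
  apply infix_invRev_of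
  rwa [invRev_invRev]

lemma exists_list_isW (V : VSeq) {g : F} (hg : g ∈ H) :
    ∃ l : List F, (∀ z ∈ l, V.IsW z) ∧ l.prod = g := by
  obtain ⟨N, h0, h1⟩ := v_has_letters V
  induction hg using Subgroup.closure_induction with
  | mem x hx =>
    rcases hx with rfl | rfl
    · exact ⟨[a], by simpa [a] using isW_of V h0, by simp⟩
    · exact ⟨[b], by simpa [b] using isW_of V h1, by simp⟩
  | one => exact ⟨[], by simp, by simp⟩
  | mul x y _ _ ihx ihy =>
    obtain ⟨l1, hW1, hp1⟩ := ihx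
    obtain ⟨l2, hW2, hp2⟩ := ihy
    refine ⟨l1 ++ l2, ?_, by rw [List.prod_append, hp1, hp2]⟩
    intro z hz
    rcases List.mem_append.mp hz with h | h
    exacts [hW1 z h, hW2 z h]
  | inv x _ ih =>
    obtain ⟨l, hWl, hpl⟩ := ih
    refine ⟨(l.map (·⁻¹)).reverse, ?_, by rw [← hpl]; exact (List.prod_inv_reverse l).symm⟩
    intro z hz
    simp only [List.mem_reverse, List.mem_map] at hz
    obtain ⟨y, hy, rfl⟩ := hz
    exact isW_inv V (hWl y hy)

lemma main_bound (V : VSeq) {g : F} (hgH : g ∈ H) (hg : g ≠ 1) {n : ℕ} (hn : 1 ≤ n)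
    {l : List F} (hWl : ∀ z ∈ l, V.IsW z) (hprod : l.prod = g ^ n) :
    n / 7 ≤ l.length := by
  obtain ⟨X, U, hW, hUnil, hUU, hconj⟩ := cyc_decomp g.toWord.length g le_rfl hg
  have hpow := pow_toWord hW hUnil hUU hconj hn
  obtain ⟨qs, hqs, hflat⟩ := prod_toWord_cover l
  rw [hprod, hpow] at hflat
  have hmid : (List.replicate n U).flatten <:+: qs.flatten :=
    ⟨X, invRev X, by rw [hflat]⟩
  obtain ⟨rs, hrs, hrflat⟩ := infix_flatten_decomp qs _ hmid
  have hrsl := forall₂_infix_toWord_trans hrs hqs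
  have hmidH : (List.replicate n U).flatten <:+: (g ^ n).toWord :=
    ⟨X, invRev X, by rw [hpow]⟩
  have hcfree : ∀ x ∈ (List.replicate n U).flatten, x.1 ≠ 2 :=
    fun x hx => mem_H_cfree (pow_mem hgH n) x (hmidH.subset hx)
  have hbound : ∀ r ∈ rs, r.length ≤ 7 * U.length - 1 := by
    intro r hr
    have hrmid : r <:+: (List.replicate n U).flatten := by
      rw [← hrflat]; exact mem_flatten_infix hr
    have hcfree_r : ∀ x ∈ r, x.1 ≠ 2 := fun x hx => hcfree x (hrmid.subset hx)
    obtain ⟨z, hzl, hrz⟩ := forall₂_exists_right hrsl hr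
    obtain ⟨-, n', m, hm, hz⟩ := hWl z hzl
    have hap : Aperiodic7 r := isW_piece_aperiodic V hm (hrz.trans hz) hcfree_r
    by_contra hc
    have h7 : 7 * U.length ≤ r.length := by omega
    obtain ⟨u, hu, h7p⟩ := seventh_power hUnil hrmid h7
    exact hap ⟨u, hu, h7p⟩
  -- counting
  have hUpos : 1 ≤ U.length := List.length_pos_iff.2 hUnil
  have hlenmid : n * U.length = (rs.map List.length).sum := by
    have := congrArg List.length hrflat
    rw [List.length_flatten, flat_rep_length] at this
    omega
  have hsum : (rs.map List.length).sum ≤ rs.length * (7 * U.length - 1) := by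
    have hb : ∀ x ∈ rs.map List.length, x ≤ 7 * U.length - 1 := by
      intro x hx
      obtain ⟨r, hr, rfl⟩ := List.mem_map.mp hx
      exact hbound r hr
    have := List.sum_le_card_nsmul (rs.map List.length) (7 * U.length - 1) hb
    simpa [nsmul_eq_mul] using this
  have hk : rs.length = l.length := by
    rw [List.Forall₂.length_eq hrsl]
  rw [hk] at hsum
  set k := l.length with hkdef
  rcases Nat.eq_zero_or_pos k with hk0 | hkpos
  · exfalso
    rw [hk0] at hsum
    nlinarith
  · have hlt : n * U.length < 7 * k * U.length := by
      have h1 : k * (7 * U.length - 1) = 7 * k * U.length - k := by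
        rw [Nat.mul_sub]; ring_nf
      have h2 : k ≤ 7 * k * U.length := by nlinarith
      omega
    have : n < 7 * k := by
      by_contra hc
      push_neg at hc
      have : 7 * k * U.length ≤ n * U.length := Nat.mul_le_mul_right _ hc
      omega
    omega


end Aux

/-- For every nontrivial `g ∈ H` and every `n ≥ 1`, `|g^n|_Y ≥ ⌊n/7⌋`. -/
theorem stmt12 (V : VSeq) :
    ∀ g : F, g ∈ H → g ≠ 1 → ∀ n : ℕ, 1 ≤ n → n / 7 ≤ V.normY (g ^ n) := by
  intro g hgH hg n hn
  obtain ⟨l, hWl, hprod⟩ := exists_list_isW V (pow_mem hgH n)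
  have hne : {k | ∃ l' : List F, l'.length = k ∧ (∀ z ∈ l', V.IsW z) ∧ l'.prod = g ^ n}.Nonempty :=
    ⟨l.length, l, rfl, hWl, hprod⟩
  obtain ⟨l', hlen', hWl', hprod'⟩ := Nat.sInf_mem hne
  rw [VSeq.normY, ← hlen']
  exact main_bound V hgH hg hn hWl' hprod'

end PurelyLox
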